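/- Assume 0 ≤ Y ≤ 1 almost surely, that every linear functional bᵀX (b ∈ ℝ^p) lies in L²(μ), and that there exists p_min ∈ (0, 1) with p_min ≤ E[Y | X] ≤ 1 − p_min almost surely, where E[Y | X] is the conditional expectation of Y given the σ-algebra generated by X. Suppose X satisfies the L²–L¹ equivalence: there is τ ≥ 1 such that ‖bᵀX‖_{L2} ≤ τ‖bᵀX‖_{L1} for all b ∈ ℝ^p. Fix b̂ ∈ ℝ^p and define the logistic (cross-entropy) loss ℓ = −Y·log(1/(1 + exp(−b̂ᵀX))) − (1 − Y)·log(1 − 1/(1 + exp(−b̂ᵀX))). Then ‖ℓ‖_{L2} ≤ (2τ/p_min) · E[ℓ]. -/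

import Mathlib

open MeasureTheory

/-- The `L_r(μ)` norm of a real random variable `W`: `(E[|W|^r])^{1/r}`. -/
noncomputable def Lnorm {Ω : Type*} [MeasurableSpace Ω] (μ : Measure Ω) (r : ℝ)
    (W : Ω → ℝ) : ℝ :=
  (∫ ω, |W ω| ^ r ∂μ) ^ (1 / r)

/-- Softplus. -/
noncomputable def sftp (t : ℝ) : ℝ := Real.log (1 + Real.exp t)

lemma sftp_nonneg (t : ℝ) : 0 ≤ sftp t := by
  apply Real.log_nonneg; nlinarith [Real.exp_pos t]

lemma sftp_le (t : ℝ) : sftp t ≤ Real.log 2 + |t| := by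
  have h1 : (1:ℝ) + Real.exp t ≤ 2 * Real.exp |t| := by
    have := Real.exp_le_exp.2 (le_abs_self t)
    have := Real.one_le_exp (abs_nonneg t)
    nlinarith
  calc sftp t ≤ Real.log (2 * Real.exp |t|) := by
        apply Real.log_le_log (by positivity) h1
    _ = Real.log 2 + |t| := by rw [Real.log_mul (by norm_num) (Real.exp_ne_zero _), Real.log_exp]

lemma sftp_add_ge (t : ℝ) : |t| + 2 * Real.log 2 ≤ 2 * (sftp t + sftp (-t)) := by
  have hsum : sftp t + sftp (-t) = Real.log ((1 + Real.exp t) * (1 + Real.exp (-t))) := by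
    rw [Real.log_mul (by positivity) (by positivity)]; rfl
  have hp : (0:ℝ) < (1 + Real.exp t) * (1 + Real.exp (-t)) := by positivity
  have h1 : |t| ≤ sftp t + sftp (-t) := by
    rw [hsum, Real.le_log_iff_exp_le hp]
    rcases abs_cases t with ⟨h, _⟩ | ⟨h, _⟩ <;> rw [h] <;>
      nlinarith [Real.exp_pos t, Real.exp_pos (-t), Real.exp_neg t,
        mul_pos (Real.exp_pos t) (Real.exp_pos (-t))]
  have h2 : 2 * Real.log 2 ≤ sftp t + sftp (-t) := by
    have h4 : (2:ℝ) * Real.log 2 = Real.log 4 := by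
      rw [show (4:ℝ) = 2 ^ 2 by norm_num, Real.log_pow]; push_cast; ring
    rw [hsum, h4]
    apply Real.log_le_log (by norm_num)
    have hinv : Real.exp t * Real.exp (-t) = 1 := by rw [← Real.exp_add]; simp
    nlinarith [Real.exp_pos t, Real.exp_pos (-t), sq_nonneg (Real.exp t - 1), hinv]
  linarith

lemma loss_eq (t y : ℝ) :
    -y * Real.log (1 / (1 + Real.exp (-t))) - (1 - y) * Real.log (1 - 1 / (1 + Real.exp (-t)))
      = y * sftp (-t) + (1 - y) * sftp t := by
  have he : (0:ℝ) < 1 + Real.exp (-t) := by positivity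
  have h1 : Real.log (1 / (1 + Real.exp (-t))) = -sftp (-t) := by
    rw [one_div, Real.log_inv]; rfl
  have h2 : (1:ℝ) - 1 / (1 + Real.exp (-t)) = Real.exp (-t) / (1 + Real.exp (-t)) := by
    field_simp
    ring
  have h3 : Real.log (1 - 1 / (1 + Real.exp (-t))) = -t - sftp (-t) := by
    rw [h2, Real.log_div (Real.exp_ne_zero _) (ne_of_gt he), Real.log_exp]; rfl
  have h4 : sftp t = t + sftp (-t) := by
    unfold sftp
    have hme : Real.exp t * (1 + Real.exp (-t)) = 1 + Real.exp t := by
      rw [mul_add, mul_one, ← Real.exp_add]; simp [add_comm]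
    rw [← hme, Real.log_mul (Real.exp_ne_zero _) (ne_of_gt he), Real.log_exp]
  rw [h1, h3, h4]; ring

lemma aux_logistic {Ω : Type*} {m : MeasurableSpace Ω} [inst : MeasurableSpace Ω] (μ : Measure Ω)
    [IsProbabilityMeasure μ] (hm : m ≤ inst) (u Y : Ω → ℝ)
    (humeas : Measurable u) (hum : Measurable[m] u) (hY : Measurable Y)
    (hY01 : ∀ᵐ ω ∂μ, Y ω ∈ Set.Icc (0 : ℝ) 1)
    (hu2 : MemLp u 2 μ)
    (pmin : ℝ) (hp0 : 0 < pmin) (hp1 : pmin < 1)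
    (hcond : ∀ᵐ ω ∂μ, pmin ≤ (μ[Y|m]) ω ∧ (μ[Y|m]) ω ≤ 1 - pmin)
    (τ : ℝ) (hτ : 1 ≤ τ) (hequiv : Lnorm μ 2 u ≤ τ * Lnorm μ 1 u) :
    Lnorm μ 2 (fun ω => Y ω * sftp (-u ω) + (1 - Y ω) * sftp (u ω))
      ≤ (2 * τ / pmin) * ∫ ω, (Y ω * sftp (-u ω) + (1 - Y ω) * sftp (u ω)) ∂μ := by
  set c : ℝ := Real.log 2 with hc_def
  have hc : 0 < c := Real.log_pos (by norm_num)
  have hsm : Measurable sftp :=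
    Real.measurable_log.comp (measurable_const.add Real.measurable_exp)
  have hgm : Measurable (fun ω => sftp (-u ω)) := hsm.comp humeas.neg
  have hhm : Measurable (fun ω => sftp (u ω)) := hsm.comp humeas
  -- integrability
  have hu1 : Integrable u μ := hu2.integrable one_le_two
  have husq : Integrable (fun ω => (u ω) ^ 2) μ := hu2.integrable_sq
  have hB_int : Integrable (fun ω => c + |u ω|) μ := (integrable_const c).add hu1.abs
  have hg_le : ∀ ω, sftp (-u ω) ≤ c + |u ω| := fun ω => by
    simpa [abs_neg] using sftp_le (-u ω)
  have hh_le : ∀ ω, sftp (u ω) ≤ c + |u ω| := fun ω => sftp_le (u ω)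
  have hg_int : Integrable (fun ω => sftp (-u ω)) μ :=
    hB_int.mono' hgm.aestronglyMeasurable (ae_of_all _ fun ω => by
      rw [Real.norm_eq_abs, abs_of_nonneg (sftp_nonneg _)]; exact hg_le ω)
  have hh_int : Integrable (fun ω => sftp (u ω)) μ :=
    hB_int.mono' hhm.aestronglyMeasurable (ae_of_all _ fun ω => by
      rw [Real.norm_eq_abs, abs_of_nonneg (sftp_nonneg _)]; exact hh_le ω)
  have hY_int : Integrable Y μ :=
    (integrable_const (1:ℝ)).mono' hY.aestronglyMeasurable
      (hY01.mono fun ω hω => by rw [Real.norm_eq_abs, abs_of_nonneg hω.1]; exact hω.2)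
  have hgY_int : Integrable (fun ω => sftp (-u ω) * Y ω) μ :=
    hB_int.mono' (hgm.mul hY).aestronglyMeasurable
      (hY01.mono fun ω hω => by
        rw [Real.norm_eq_abs, abs_mul, abs_of_nonneg (sftp_nonneg _), abs_of_nonneg hω.1]
        calc sftp (-u ω) * Y ω ≤ sftp (-u ω) * 1 :=
              mul_le_mul_of_nonneg_left hω.2 (sftp_nonneg _)
          _ = sftp (-u ω) := mul_one _
          _ ≤ c + |u ω| := hg_le ω)
  have hhY_int : Integrable (fun ω => sftp (u ω) * Y ω) μ :=
    hB_int.mono' (hhm.mul hY).aestronglyMeasurable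
      (hY01.mono fun ω hω => by
        rw [Real.norm_eq_abs, abs_mul, abs_of_nonneg (sftp_nonneg _), abs_of_nonneg hω.1]
        calc sftp (u ω) * Y ω ≤ sftp (u ω) * 1 :=
              mul_le_mul_of_nonneg_left hω.2 (sftp_nonneg _)
          _ = sftp (u ω) := mul_one _
          _ ≤ c + |u ω| := hh_le ω)
  -- conditional expectation facts
  have hZ_int : Integrable (μ[Y|m]) μ := integrable_condExp
  have hZbd : ∀ᵐ ω ∂μ, pmin ≤ (μ[Y|m]) ω ∧ (μ[Y|m]) ω ≤ 1 - pmin := hcond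
  have hgsm : StronglyMeasurable[m] (fun ω => sftp (-u ω)) :=
    (hsm.comp hum.neg).stronglyMeasurable
  have hhsm : StronglyMeasurable[m] (fun ω => sftp (u ω)) :=
    (hsm.comp hum).stronglyMeasurable
  have pullg : μ[(fun ω => sftp (-u ω)) * Y|m] =ᵐ[μ] (fun ω => sftp (-u ω)) * μ[Y|m] :=
    condExp_mul_of_stronglyMeasurable_left hgsm hgY_int hY_int
  have pullh : μ[(fun ω => sftp (u ω)) * Y|m] =ᵐ[μ] (fun ω => sftp (u ω)) * μ[Y|m] :=
    condExp_mul_of_stronglyMeasurable_left hhsm hhY_int hY_int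
  have eqg : ∫ ω, sftp (-u ω) * Y ω ∂μ = ∫ ω, sftp (-u ω) * (μ[Y|m]) ω ∂μ := by
    calc ∫ ω, sftp (-u ω) * Y ω ∂μ = ∫ ω, ((fun ω => sftp (-u ω)) * Y) ω ∂μ := rfl
      _ = ∫ ω, (μ[(fun ω => sftp (-u ω)) * Y|m]) ω ∂μ := (integral_condExp hm).symm
      _ = ∫ ω, ((fun ω => sftp (-u ω)) * μ[Y|m]) ω ∂μ := integral_congr_ae pullg
      _ = ∫ ω, sftp (-u ω) * (μ[Y|m]) ω ∂μ := rfl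
  have eqh : ∫ ω, sftp (u ω) * Y ω ∂μ = ∫ ω, sftp (u ω) * (μ[Y|m]) ω ∂μ := by
    calc ∫ ω, sftp (u ω) * Y ω ∂μ = ∫ ω, ((fun ω => sftp (u ω)) * Y) ω ∂μ := rfl
      _ = ∫ ω, (μ[(fun ω => sftp (u ω)) * Y|m]) ω ∂μ := (integral_condExp hm).symm
      _ = ∫ ω, ((fun ω => sftp (u ω)) * μ[Y|m]) ω ∂μ := integral_congr_ae pullh
      _ = ∫ ω, sftp (u ω) * (μ[Y|m]) ω ∂μ := rfl
  have hgZ_int : Integrable (fun ω => sftp (-u ω) * (μ[Y|m]) ω) μ :=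
    hB_int.mono' (hgm.aestronglyMeasurable.mul hZ_int.aestronglyMeasurable)
      (hZbd.mono fun ω hω => by
        rw [Real.norm_eq_abs, abs_mul, abs_of_nonneg (sftp_nonneg _),
          abs_of_nonneg (le_trans hp0.le hω.1)]
        calc sftp (-u ω) * (μ[Y|m]) ω ≤ sftp (-u ω) * 1 :=
              mul_le_mul_of_nonneg_left (by linarith [hω.2]) (sftp_nonneg _)
          _ = sftp (-u ω) := mul_one _
          _ ≤ c + |u ω| := hg_le ω)
  have hhZ_int : Integrable (fun ω => sftp (u ω) * (μ[Y|m]) ω) μ :=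
    hB_int.mono' (hhm.aestronglyMeasurable.mul hZ_int.aestronglyMeasurable)
      (hZbd.mono fun ω hω => by
        rw [Real.norm_eq_abs, abs_mul, abs_of_nonneg (sftp_nonneg _),
          abs_of_nonneg (le_trans hp0.le hω.1)]
        calc sftp (u ω) * (μ[Y|m]) ω ≤ sftp (u ω) * 1 :=
              mul_le_mul_of_nonneg_left (by linarith [hω.2]) (sftp_nonneg _)
          _ = sftp (u ω) := mul_one _
          _ ≤ c + |u ω| := hh_le ω)
  -- expectation of the loss, rewritten via conditional expectation
  have hA1 : Integrable (fun ω => sftp (-u ω) * Y ω + sftp (u ω)) μ := hgY_int.add hh_int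
  have hA2 : Integrable (fun ω => sftp (-u ω) * (μ[Y|m]) ω + sftp (u ω)) μ :=
    hgZ_int.add hh_int
  have hZcomb_int : Integrable
      (fun ω => (μ[Y|m]) ω * sftp (-u ω) + (1 - (μ[Y|m]) ω) * sftp (u ω)) μ := by
    have e : (fun ω => (μ[Y|m]) ω * sftp (-u ω) + (1 - (μ[Y|m]) ω) * sftp (u ω))
        = fun ω => (sftp (-u ω) * (μ[Y|m]) ω + sftp (u ω)) - sftp (u ω) * (μ[Y|m]) ω := by
      funext ω; ring
    rw [e]; exact hA2.sub hhZ_int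
  have hgh_int : Integrable (fun ω => sftp (-u ω) + sftp (u ω)) μ := hg_int.add hh_int
  have hpgh_int : Integrable (fun ω => pmin * (sftp (-u ω) + sftp (u ω))) μ :=
    hgh_int.const_mul pmin
  have hEl_eq : ∫ ω, (Y ω * sftp (-u ω) + (1 - Y ω) * sftp (u ω)) ∂μ
      = ∫ ω, ((μ[Y|m]) ω * sftp (-u ω) + (1 - (μ[Y|m]) ω) * sftp (u ω)) ∂μ := by
    have e1 : (fun ω => Y ω * sftp (-u ω) + (1 - Y ω) * sftp (u ω))
        = fun ω => (sftp (-u ω) * Y ω + sftp (u ω)) - sftp (u ω) * Y ω := by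
      funext ω; ring
    have e2 : (fun ω => (μ[Y|m]) ω * sftp (-u ω) + (1 - (μ[Y|m]) ω) * sftp (u ω))
        = fun ω => (sftp (-u ω) * (μ[Y|m]) ω + sftp (u ω)) - sftp (u ω) * (μ[Y|m]) ω := by
      funext ω; ring
    rw [e1, e2, integral_sub hA1 hhY_int, integral_sub hA2 hhZ_int,
      integral_add hgY_int hh_int, integral_add hgZ_int hh_int, eqg, eqh]
  -- lower bound on the expected loss
  have hlow : pmin * ((∫ ω, |u ω| ∂μ) + 2 * c)
      ≤ 2 * ∫ ω, (Y ω * sftp (-u ω) + (1 - Y ω) * sftp (u ω)) ∂μ := by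
    have step1 : ∫ ω, pmin * (sftp (-u ω) + sftp (u ω)) ∂μ
        ≤ ∫ ω, ((μ[Y|m]) ω * sftp (-u ω) + (1 - (μ[Y|m]) ω) * sftp (u ω)) ∂μ := by
      refine integral_mono_ae hpgh_int hZcomb_int ?_
      filter_upwards [hZbd] with ω hω
      nlinarith [sftp_nonneg (-u ω), sftp_nonneg (u ω), hω.1, hω.2]
    have step2 : ∫ ω, ((|u ω| + 2 * c) / 2) ∂μ
        ≤ ∫ ω, (sftp (-u ω) + sftp (u ω)) ∂μ := by
      have hdiv_int : Integrable (fun ω => (|u ω| + 2 * c) / 2) μ :=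
        (hu1.abs.add (integrable_const _)).div_const 2
      refine integral_mono_ae hdiv_int hgh_int (ae_of_all _ fun ω => ?_)
      have := sftp_add_ge (u ω)
      linarith
    have step3 : ∫ ω, ((|u ω| + 2 * c) / 2) ∂μ = ((∫ ω, |u ω| ∂μ) + 2 * c) / 2 := by
      rw [integral_div, integral_add hu1.abs (integrable_const _), integral_const]
      simp [measure_univ]
    rw [hEl_eq]
    rw [integral_const_mul] at step1
    have s4 : pmin * (((∫ ω, |u ω| ∂μ) + 2 * c) / 2)
        ≤ pmin * ∫ ω, (sftp (-u ω) + sftp (u ω)) ∂μ :=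
      mul_le_mul_of_nonneg_left (step3 ▸ step2) hp0.le
    linarith [step1, s4]
  -- the integrals I1 and I2
  set I1 : ℝ := ∫ ω, |u ω| ∂μ with hI1_def
  set I2 : ℝ := ∫ ω, (u ω) ^ 2 ∂μ with hI2_def
  have hI1_nonneg : 0 ≤ I1 := integral_nonneg fun ω => abs_nonneg _
  have hI2_nonneg : 0 ≤ I2 := integral_nonneg fun ω => sq_nonneg _
  -- Cauchy–Schwarz : I1 ^ 2 ≤ I2
  have hCS : I1 ^ 2 ≤ I2 := by
    have h0 := ProbabilityTheory.variance_nonneg (|u|) μ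
    rw [ProbabilityTheory.variance_eq_sub hu2.abs] at h0
    have h1 : ∫ x, (|u| ^ 2) x ∂μ = I2 :=
      integral_congr_ae (ae_of_all _ fun ω => by simp [sq_abs])
    have h2 : ∫ x, |u| x ∂μ = I1 :=
      integral_congr_ae (ae_of_all _ fun ω => rfl)
    rw [h1, h2] at h0
    linarith
  have hI1_le : I1 ≤ Real.sqrt I2 := (Real.le_sqrt hI1_nonneg hI2_nonneg).2 hCS
  -- upper bound on the L2 norm of the loss
  have hrw2 : ∀ x : ℝ, |x| ^ (2:ℝ) = x ^ 2 := fun x => by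
    rw [show (2:ℝ) = ((2:ℕ):ℝ) by norm_num, Real.rpow_natCast, sq_abs]
  have hlm : Measurable (fun ω => Y ω * sftp (-u ω) + (1 - Y ω) * sftp (u ω)) :=
    (hY.mul hgm).add ((measurable_const.sub hY).mul hhm)
  have hl_bd : ∀ᵐ ω ∂μ, 0 ≤ Y ω * sftp (-u ω) + (1 - Y ω) * sftp (u ω)
      ∧ Y ω * sftp (-u ω) + (1 - Y ω) * sftp (u ω) ≤ c + |u ω| := by
    filter_upwards [hY01] with ω hω
    constructor
    · nlinarith [sftp_nonneg (-u ω), sftp_nonneg (u ω), hω.1, hω.2]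
    · nlinarith [sftp_nonneg (-u ω), sftp_nonneg (u ω), hω.1, hω.2, hg_le ω, hh_le ω]
  have hB2_int : Integrable (fun ω => (c + |u ω|) ^ 2) μ := by
    have e : (fun ω => (c + |u ω|) ^ 2) = fun ω => c ^ 2 + 2 * c * |u ω| + (u ω) ^ 2 := by
      funext ω; rw [add_sq, sq_abs]
    rw [e]
    exact ((integrable_const _).add (hu1.abs.const_mul _)).add husq
  have hlsq_int : Integrable (fun ω => (Y ω * sftp (-u ω) + (1 - Y ω) * sftp (u ω)) ^ 2) μ := by
    refine hB2_int.mono' (hlm.pow_const 2).aestronglyMeasurable ?_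
    filter_upwards [hl_bd] with ω hω
    rw [Real.norm_eq_abs, abs_of_nonneg (sq_nonneg _)]
    nlinarith [hω.1, hω.2, abs_nonneg (u ω), hc.le]
  have hup1 : ∫ ω, (Y ω * sftp (-u ω) + (1 - Y ω) * sftp (u ω)) ^ 2 ∂μ
      ≤ c ^ 2 + 2 * c * I1 + I2 := by
    have habs_int : Integrable (fun ω => |u ω|) μ := hu1.abs
    have hcabs_int : Integrable (fun ω => 2 * c * |u ω|) μ := habs_int.const_mul _
    have hc2_int : Integrable (fun ω => c ^ 2 + 2 * c * |u ω|) μ :=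
      (integrable_const _).add hcabs_int
    have e : ∫ ω, (c ^ 2 + 2 * c * |u ω| + (u ω) ^ 2) ∂μ = c ^ 2 + 2 * c * I1 + I2 := by
      rw [integral_add hc2_int husq, integral_add (integrable_const _) hcabs_int,
        integral_const, integral_const_mul]
      simp [measure_univ]
      rfl
    have hsum2_int : Integrable (fun ω => c ^ 2 + 2 * c * |u ω| + (u ω) ^ 2) μ :=
      hc2_int.add husq
    calc ∫ ω, (Y ω * sftp (-u ω) + (1 - Y ω) * sftp (u ω)) ^ 2 ∂μ
        ≤ ∫ ω, (c ^ 2 + 2 * c * |u ω| + (u ω) ^ 2) ∂μ := by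
          refine integral_mono_ae hlsq_int hsum2_int ?_
          filter_upwards [hl_bd] with ω hω
          calc (Y ω * sftp (-u ω) + (1 - Y ω) * sftp (u ω)) ^ 2
              ≤ (c + |u ω|) ^ 2 := pow_le_pow_left₀ hω.1 hω.2 2
            _ = c ^ 2 + 2 * c * |u ω| + (u ω) ^ 2 := by rw [add_sq, sq_abs]
      _ = c ^ 2 + 2 * c * I1 + I2 := e
  -- identify the Lnorms
  have hLnorm2 : Lnorm μ 2 (fun ω => Y ω * sftp (-u ω) + (1 - Y ω) * sftp (u ω))
      = Real.sqrt (∫ ω, (Y ω * sftp (-u ω) + (1 - Y ω) * sftp (u ω)) ^ 2 ∂μ) := by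
    unfold Lnorm
    rw [show (∫ ω, |Y ω * sftp (-u ω) + (1 - Y ω) * sftp (u ω)| ^ (2:ℝ) ∂μ)
        = ∫ ω, (Y ω * sftp (-u ω) + (1 - Y ω) * sftp (u ω)) ^ 2 ∂μ from
      integral_congr_ae (ae_of_all _ fun ω => hrw2 _), ← Real.sqrt_eq_rpow]
  have hLnorm2u : Lnorm μ 2 u = Real.sqrt I2 := by
    unfold Lnorm
    rw [show (∫ ω, |u ω| ^ (2:ℝ) ∂μ) = ∫ ω, (u ω) ^ 2 ∂μ from
      integral_congr_ae (ae_of_all _ fun ω => hrw2 _), ← Real.sqrt_eq_rpow]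
  have hLnorm1u : Lnorm μ 1 u = I1 := by
    unfold Lnorm
    simp [Real.rpow_one]
    rfl
  have hequ : Real.sqrt I2 ≤ τ * I1 := by
    have := hequiv
    rwa [hLnorm2u, hLnorm1u] at this
  -- put everything together
  have hfinal1 : Lnorm μ 2 (fun ω => Y ω * sftp (-u ω) + (1 - Y ω) * sftp (u ω))
      ≤ c + Real.sqrt I2 := by
    rw [hLnorm2]
    calc Real.sqrt (∫ ω, (Y ω * sftp (-u ω) + (1 - Y ω) * sftp (u ω)) ^ 2 ∂μ)
        ≤ Real.sqrt ((c + Real.sqrt I2) ^ 2) := by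
          apply Real.sqrt_le_sqrt
          have hs : Real.sqrt I2 ^ 2 = I2 := Real.sq_sqrt hI2_nonneg
          nlinarith [hup1, hI1_le, hc.le, hI1_nonneg, Real.sqrt_nonneg I2]
      _ = c + Real.sqrt I2 := Real.sqrt_sq (by positivity)
  set El : ℝ := ∫ ω, (Y ω * sftp (-u ω) + (1 - Y ω) * sftp (u ω)) ∂μ with hEl_def
  have hlow' : pmin * (I1 + 2 * c) ≤ 2 * El := hlow
  have htp : (0:ℝ) < 2 * τ / pmin := by positivity
  have hmain : c + Real.sqrt I2 ≤ (2 * τ / pmin) * El := by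
    have h1 : τ * (I1 + 2 * c) ≤ (2 * τ / pmin) * El := by
      have h2 : (2 * τ / pmin) * (pmin * (I1 + 2 * c) / 2) = τ * (I1 + 2 * c) := by
        field_simp
      calc τ * (I1 + 2 * c) = (2 * τ / pmin) * (pmin * (I1 + 2 * c) / 2) := h2.symm
        _ ≤ (2 * τ / pmin) * El := by
            apply mul_le_mul_of_nonneg_left (by linarith) htp.le
    have h3 : (1:ℝ) * c ≤ τ * c := mul_le_mul_of_nonneg_right hτ hc.le
    have h4 : τ * (I1 + 2 * c) = τ * I1 + 2 * (τ * c) := by ring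
    linarith [hequ, h1, h3, h4, mul_nonneg (le_trans zero_le_one hτ) hc.le]
  exact le_trans hfinal1 hmain

theorem logistic_loss_L2_bound {Ω : Type*} [MeasurableSpace Ω] (μ : Measure Ω)
    [IsProbabilityMeasure μ] {p : ℕ} (X : Ω → Fin p → ℝ) (Y : Ω → ℝ)
    (hX : Measurable X) (hY : Measurable Y)
    (hY01 : ∀ᵐ ω ∂μ, Y ω ∈ Set.Icc (0 : ℝ) 1)
    (hX2 : ∀ b : Fin p → ℝ, MemLp (fun ω => ∑ i, b i * X ω i) 2 μ)
    (pmin : ℝ) (hpmin : pmin ∈ Set.Ioo (0 : ℝ) 1)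
    (hcond : ∀ᵐ ω ∂μ,
      pmin ≤ (μ[Y | MeasurableSpace.comap X inferInstance]) ω ∧
        (μ[Y | MeasurableSpace.comap X inferInstance]) ω ≤ 1 - pmin)
    (τ : ℝ) (hτ : 1 ≤ τ)
    (hequiv : ∀ b : Fin p → ℝ,
      Lnorm μ 2 (fun ω => ∑ i, b i * X ω i) ≤ τ * Lnorm μ 1 (fun ω => ∑ i, b i * X ω i))
    (bhat : Fin p → ℝ) :
    Lnorm μ 2 (fun ω =>
        -(Y ω) * Real.log (1 / (1 + Real.exp (-(∑ i, bhat i * X ω i))))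
          - (1 - Y ω) * Real.log (1 - 1 / (1 + Real.exp (-(∑ i, bhat i * X ω i)))))
      ≤ (2 * τ / pmin) * ∫ ω,
          (-(Y ω) * Real.log (1 / (1 + Real.exp (-(∑ i, bhat i * X ω i))))
            - (1 - Y ω) * Real.log (1 - 1 / (1 + Real.exp (-(∑ i, bhat i * X ω i))))) ∂μ := by
  simp only [loss_eq]
  have humeas : Measurable (fun ω => ∑ i, bhat i * X ω i) :=
    Finset.measurable_sum _ fun i _ => ((measurable_pi_apply i).comp hX).const_mul _
  have hXm : Measurable[MeasurableSpace.comap X inferInstance] X :=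
    Measurable.of_comap_le le_rfl
  have hum : Measurable[MeasurableSpace.comap X inferInstance]
      (fun ω => ∑ i, bhat i * X ω i) :=
    Finset.measurable_sum _ fun i _ => ((measurable_pi_apply i).comp hXm).const_mul _
  exact aux_logistic μ hX.comap_le _ Y humeas hum hY hY01 (hX2 bhat) pmin hpmin.1 hpmin.2
    hcond τ hτ (hequiv bhat)
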